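/- For a deterministic small-step operational semantics →_B on states (Store × Stm), define S₁ ≈_ρ S₂ iff there exists a bisimulation R ⊆ Store × Stm × Stm with R(ρ,S₁,S₂). Then S₁ ≈_ρ S₂ if and only if α^ρ_sch(T(S₁)) = α^ρ_sch(T(S₂)), where α^ρ_sch(X) := {sch(τ) | τ ∈ X, τ starts in a state with store ρ}. -/

import Mathlib

/-- A silent step: a transition that does not change the store. -/
def Sil {Store Stm : Type*} (B : Store × Stm → Store × Stm → Prop)
    (s s' : Store × Stm) : Prop :=
  B s s' ∧ s.1 = s'.1

/-- The weak transition ⟨ρ,S⟩ ⇒^â ⟨ρ',S'⟩: if the store is unchanged (â = ε),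
any number of silent steps; otherwise silent steps, one store-changing step,
and silent steps. -/
def Weak {Store Stm : Type*} (B : Store × Stm → Store × Stm → Prop)
    (s s' : Store × Stm) : Prop :=
  (s.1 = s'.1 ∧ Relation.ReflTransGen (Sil B) s s') ∨
  (s.1 ≠ s'.1 ∧ ∃ u v : Store × Stm,
    Relation.ReflTransGen (Sil B) s u ∧ B u v ∧
    Relation.ReflTransGen (Sil B) v s')

/-- R is a bisimulation when every step of one side is matched by a weak
transition of the other side with the same store change, re-establishing R. -/
def IsBisim {Store Stm : Type*} (B : Store × Stm → Store × Stm → Prop)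
    (R : Store → Stm → Stm → Prop) : Prop :=
  ∀ ρ S₁ S₂, R ρ S₁ S₂ →
    (∀ ρ' S₁', B (ρ, S₁) (ρ', S₁') →
      ∃ S₂', Weak B (ρ, S₂) (ρ', S₂') ∧ R ρ' S₁' S₂') ∧
    (∀ ρ' S₂', B (ρ, S₂) (ρ', S₂') →
      ∃ S₁', Weak B (ρ, S₁) (ρ', S₁') ∧ R ρ' S₁' S₂')

/-- Store changes of a trace: the sequence of stores with consecutive
duplicates collapsed. -/
def sch {Store C : Type*} [DecidableEq Store] : List (Store × C) → List Store
  | [] => []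
  | [(ρ, _)] => [ρ]
  | (ρ₀, _) :: (ρ₁, c₁) :: σ =>
    if ρ₀ = ρ₁ then sch ((ρ₁, c₁) :: σ) else ρ₀ :: sch ((ρ₁, c₁) :: σ)

/-- T(S): the set of finite traces of →_B starting from ⟨ρ₀,S⟩ for any store ρ₀. -/
def Traces {Store Stm : Type*} (B : Store × Stm → Store × Stm → Prop)
    (S : Stm) : Set (List (Store × Stm)) :=
  {τ | τ ≠ [] ∧ (∃ ρ₀ : Store, τ.head? = some (ρ₀, S)) ∧ τ.Chain' B}

/-- α^ρ_sch(X): store-change sequences of the traces in X starting in a state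
with store ρ. -/
def alphaSchAt {Store Stm : Type*} [DecidableEq Store] (ρ : Store)
    (X : Set (List (Store × Stm))) : Set (List Store) :=
  {l | ∃ τ ∈ X, (∃ S' : Stm, τ.head? = some (ρ, S')) ∧ sch τ = l}
section Aux

variable {Store Stm C : Type*} [DecidableEq Store]

theorem sch_cc_eq (a : Store) (x y : C) (σ : List (Store × C)) :
    sch ((a, x) :: (a, y) :: σ) = sch ((a, y) :: σ) := by simp [sch]

theorem sch_cc_ne {a b : Store} (h : a ≠ b) (x y : C) (σ : List (Store × C)) :
    sch ((a, x) :: (b, y) :: σ) = a :: sch ((b, y) :: σ) := by simp [sch, h]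

theorem sch_head : ∀ (τ : List (Store × C)), (sch τ).head? = (τ.map Prod.fst).head?
  | [] => rfl
  | [(a, x)] => rfl
  | (a, x) :: (b, y) :: σ => by
    by_cases h : a = b
    · subst h; rw [sch_cc_eq, sch_head ((a, y) :: σ)]; rfl
    · rw [sch_cc_ne h]; rfl

theorem sch_ne_nil {τ : List (Store × C)} (h : τ ≠ []) : sch τ ≠ [] := by
  intro hn
  have := sch_head τ
  rw [hn] at this
  cases τ with
  | nil => exact h rfl
  | cons a l => simp at this

theorem sch_append_silent {a : Store} :
    ∀ (l : List (Store × C)) {m : List (Store × C)} {S : C},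
      (∀ x ∈ l, x.1 = a) → m.head? = some (a, S) → sch (l ++ m) = sch m
  | [], _, _, _, _ => rfl
  | [(x1, x2)], m, S, hl, hm => by
    obtain ⟨m₀, m', rfl⟩ : ∃ m₀ m', m = m₀ :: m' := by
      cases m with
      | nil => simp at hm
      | cons m₀ m' => exact ⟨m₀, m', rfl⟩
    have hm₀ : m₀ = (a, S) := by simpa using hm
    have hx : x1 = a := hl (x1, x2) (by simp)
    rw [hx, hm₀]
    simpa using sch_cc_eq a x2 S m'
  | (x1, x2) :: (y1, y2) :: l', m, S, hl, hm => by
    have hx : x1 = a := hl (x1, x2) (by simp)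
    have hy : y1 = a := hl (y1, y2) (by simp)
    rw [hx, hy, List.cons_append, List.cons_append, sch_cc_eq, ← List.cons_append]
    exact sch_append_silent ((a, y2) :: l')
      (by intro z hz
          rcases List.mem_cons.mp hz with rfl | h
          · rfl
          · exact hl z (by simp [h])) hm

theorem sch_append_change {a b : Store} (hab : a ≠ b) :
    ∀ (l : List (Store × C)) {m : List (Store × C)} {S : C},
      l ≠ [] → (∀ x ∈ l, x.1 = a) → m.head? = some (b, S) →
      sch (l ++ m) = a :: sch m
  | [], _, _, h, _, _ => absurd rfl h
  | [(x1, x2)], m, S, _, hl, hm => by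
    obtain ⟨m₀, m', rfl⟩ : ∃ m₀ m', m = m₀ :: m' := by
      cases m with
      | nil => simp at hm
      | cons m₀ m' => exact ⟨m₀, m', rfl⟩
    have hm₀ : m₀ = (b, S) := by simpa using hm
    have hx : x1 = a := hl (x1, x2) (by simp)
    rw [hx, hm₀]
    simpa using sch_cc_ne hab x2 S m'
  | (x1, x2) :: (y1, y2) :: l', m, S, _, hl, hm => by
    have hx : x1 = a := hl (x1, x2) (by simp)
    have hy : y1 = a := hl (y1, y2) (by simp)
    rw [hx, hy, List.cons_append, List.cons_append, sch_cc_eq, ← List.cons_append]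
    exact sch_append_change hab ((a, y2) :: l') (by simp)
      (by intro z hz
          rcases List.mem_cons.mp hz with rfl | h
          · rfl
          · exact hl z (by simp [h])) hm

end Aux
section Sem

variable {Store Stm : Type*} [DecidableEq Store]
variable {B : Store × Stm → Store × Stm → Prop}

theorem sil_store {s u : Store × Stm} (h : Relation.ReflTransGen (Sil B) s u) :
    s.1 = u.1 := by
  induction h with
  | refl => rfl
  | tail _ h2 ih => exact ih.trans h2.2

/-- A reflexive-transitive silent run yields a concrete chain list. -/
theorem silent_chain_list {s u : Store × Stm} (h : Relation.ReflTransGen (Sil B) s u) :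
    ∃ l : List (Store × Stm), l.Chain' B ∧ l.head? = some s ∧ l.getLast? = some u ∧
      ∀ x ∈ l, x.1 = s.1 := by
  induction h with
  | refl => exact ⟨[s], List.isChain_singleton _, rfl, rfl, by simp⟩
  | @tail b c _ h2 ih =>
    obtain ⟨l, hc, hh, hl, hst⟩ := ih
    refine ⟨l ++ [c], ?_, ?_, by simp, ?_⟩
    · rw [List.Chain', List.isChain_append]
      refine ⟨hc, by simp, fun x hx y hy => ?_⟩
      simp only [List.head?_cons, Option.mem_def, Option.some.injEq] at hy
      rw [hl] at hx
      simp only [Option.mem_def, Option.some.injEq] at hx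
      subst hx; subst hy; exact h2.1
    · cases l with
      | nil => simp at hh
      | cons a l' => simpa using hh
    · intro x hx
      rcases List.mem_append.mp hx with hx | hx
      · exact hst x hx
      · have : x = c := by simpa using hx
        subst this
        have hb : b ∈ l := List.mem_of_getLast? hl
        exact h2.2.symm.trans (hst b hb)

theorem mem_traces_single (S : Stm) (ρ : Store) : [(ρ, S)] ∈ Traces B S :=
  ⟨by simp, ⟨ρ, rfl⟩, List.isChain_singleton _⟩

/-- Silent step preserves the store-change abstraction. -/
theorem alpha_silent (hdet : ∀ s t t' : Store × Stm, B s t → B s t' → t = t')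
    {ρ : Store} {S S' : Stm} (hB : B (ρ, S) (ρ, S')) :
    alphaSchAt ρ (Traces B S) = alphaSchAt ρ (Traces B S') := by
  ext L
  constructor
  · rintro ⟨τ, ⟨hne, ⟨ρ₀, hh₀⟩, hch⟩, ⟨T, hh⟩, rfl⟩
    obtain ⟨τ₀, rest, rfl⟩ : ∃ τ₀ rest, τ = τ₀ :: rest :=
      List.exists_cons_of_ne_nil hne
    have hτ₀ : τ₀ = (ρ, S) := by
      have h1 : τ₀ = (ρ, T) := by simpa using hh
      have h2 : τ₀ = (ρ₀, S) := by simpa using hh₀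
      rw [h1] at h2
      obtain ⟨-, rfl⟩ := Prod.mk.injEq .. ▸ (Prod.ext_iff.mp h2)
      exact h1
    subst hτ₀
    cases rest with
    | nil =>
      exact ⟨[(ρ, S')], mem_traces_single S' ρ, ⟨S', rfl⟩, by simp [sch]⟩
    | cons x rest' =>
      have hBx : B (ρ, S) x := (List.isChain_cons_cons.mp hch).1
      have hx : x = (ρ, S') := hdet _ _ _ hBx hB
      subst hx
      refine ⟨(ρ, S') :: rest', ⟨by simp, ⟨ρ, rfl⟩, (List.isChain_cons_cons.mp hch).2⟩,
        ⟨S', rfl⟩, ?_⟩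
      exact (sch_cc_eq ρ S S' rest').symm
  · rintro ⟨τ, ⟨hne, ⟨ρ₀, hh₀⟩, hch⟩, ⟨T, hh⟩, rfl⟩
    obtain ⟨τ₀, rest, rfl⟩ : ∃ τ₀ rest, τ = τ₀ :: rest :=
      List.exists_cons_of_ne_nil hne
    have hτ₀ : τ₀ = (ρ, S') := by
      have h1 : τ₀ = (ρ, T) := by simpa using hh
      have h2 : τ₀ = (ρ₀, S') := by simpa using hh₀
      rw [h1] at h2
      obtain ⟨-, rfl⟩ := Prod.mk.injEq .. ▸ (Prod.ext_iff.mp h2)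
      exact h1
    subst hτ₀
    refine ⟨(ρ, S) :: (ρ, S') :: rest, ⟨by simp, ⟨ρ, rfl⟩, List.isChain_cons_cons.mpr ⟨hB, hch⟩⟩,
      ⟨S, rfl⟩, sch_cc_eq ρ S S' rest⟩

/-- Store-changing step: the abstraction decomposes. -/
theorem alpha_change (hdet : ∀ s t t' : Store × Stm, B s t → B s t' → t = t')
    {ρ ρ' : Store} {S S' : Stm} (hB : B (ρ, S) (ρ', S')) (hne : ρ ≠ ρ') :
    alphaSchAt ρ (Traces B S) =
      insert [ρ] ((fun l => ρ :: l) '' alphaSchAt ρ' (Traces B S')) := by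
  ext L
  constructor
  · rintro ⟨τ, ⟨hn, ⟨ρ₀, hh₀⟩, hch⟩, ⟨T, hh⟩, rfl⟩
    obtain ⟨τ₀, rest, rfl⟩ : ∃ τ₀ rest, τ = τ₀ :: rest :=
      List.exists_cons_of_ne_nil hn
    have hτ₀ : τ₀ = (ρ, S) := by
      have h1 : τ₀ = (ρ, T) := by simpa using hh
      have h2 : τ₀ = (ρ₀, S) := by simpa using hh₀
      rw [h1] at h2
      obtain ⟨-, rfl⟩ := Prod.mk.injEq .. ▸ (Prod.ext_iff.mp h2)
      exact h1
    subst hτ₀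
    cases rest with
    | nil => left; simp [sch]
    | cons x rest' =>
      have hBx : B (ρ, S) x := (List.isChain_cons_cons.mp hch).1
      have hx : x = (ρ', S') := hdet _ _ _ hBx hB
      subst hx
      right
      exact ⟨sch ((ρ', S') :: rest'),
        ⟨(ρ', S') :: rest', ⟨by simp, ⟨ρ', rfl⟩, (List.isChain_cons_cons.mp hch).2⟩, ⟨S', rfl⟩, rfl⟩,
        (sch_cc_ne hne S S' rest').symm⟩
  · rintro (rfl | ⟨l, ⟨τ, ⟨hn, ⟨ρ₀, hh₀⟩, hch⟩, ⟨T, hh⟩, rfl⟩, rfl⟩)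
    · exact ⟨[(ρ, S)], mem_traces_single S ρ, ⟨S, rfl⟩, by simp [sch]⟩
    · obtain ⟨τ₀, rest, rfl⟩ : ∃ τ₀ rest, τ = τ₀ :: rest :=
        List.exists_cons_of_ne_nil hn
      have hτ₀ : τ₀ = (ρ', S') := by
        have h1 : τ₀ = (ρ', T) := by simpa using hh
        have h2 : τ₀ = (ρ₀, S') := by simpa using hh₀
        rw [h1] at h2
        obtain ⟨-, rfl⟩ := Prod.mk.injEq .. ▸ (Prod.ext_iff.mp h2)
        exact h1
      subst hτ₀
      exact ⟨(ρ, S) :: (ρ', S') :: rest,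
        ⟨by simp, ⟨ρ, rfl⟩, List.isChain_cons_cons.mpr ⟨hB, hch⟩⟩, ⟨S, rfl⟩,
        sch_cc_ne hne S S' rest⟩

/-- Silent runs preserve the abstraction. -/
theorem alpha_silent_run (hdet : ∀ s t t' : Store × Stm, B s t → B s t' → t = t')
    {s u : Store × Stm} (h : Relation.ReflTransGen (Sil B) s u) :
    alphaSchAt s.1 (Traces B s.2) = alphaSchAt s.1 (Traces B u.2) := by
  induction h using Relation.ReflTransGen.head_induction_on with
  | refl => rfl
  | head h2 h3 ih =>
    rename_i s' x
    have hx : x = (s'.1, x.2) := Prod.ext h2.2.symm rfl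
    have hB : B (s'.1, s'.2) (s'.1, x.2) := by rw [← hx]; exact h2.1
    rw [show ((s'.1, s'.2) : Store × Stm) = s' from rfl] at hB
    rw [alpha_silent hdet hB]
    rw [← h2.2] at ih
    exact ih

end Sem
section Sem2

variable {Store Stm : Type*} [DecidableEq Store]
variable {B : Store × Stm → Store × Stm → Prop}

/-- From a trace with store changes [ρ, ρ'] extract a silent run followed by a
store-changing step. -/
theorem extract_change {ρ ρ' : Store} :
    ∀ (τ : List (Store × Stm)), τ.Chain' B → ∀ S : Stm, τ.head? = some (ρ, S) →
      sch τ = [ρ, ρ'] →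
      ∃ (u : Store × Stm) (S'' : Stm),
        Relation.ReflTransGen (Sil B) (ρ, S) u ∧ B u (ρ', S'')
  | [], _, _, hh, _ => by simp at hh
  | [(x1, x2)], _, S, hh, hsch => by
    simp [sch] at hsch
  | (x1, x2) :: (y1, y2) :: rest, hch, S, hh, hsch => by
    have hpair : (ρ, S) = ((x1, x2) : Store × Stm) := by simpa using hh.symm
    obtain ⟨rfl, rfl⟩ : ρ = x1 ∧ S = x2 :=
      ⟨congrArg Prod.fst hpair, congrArg Prod.snd hpair⟩
    have hBxy : B (ρ, S) (y1, y2) := (List.isChain_cons_cons.mp hch).1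
    by_cases hy : ρ = y1
    · subst hy
      rw [sch_cc_eq] at hsch
      obtain ⟨u, S'', hrtg, hstep⟩ :=
        extract_change ((ρ, y2) :: rest) (List.isChain_cons_cons.mp hch).2 y2 rfl hsch
      exact ⟨u, S'', Relation.ReflTransGen.head ⟨hBxy, rfl⟩ hrtg, hstep⟩
    · rw [sch_cc_ne hy] at hsch
      have h1 : sch ((y1, y2) :: rest) = [ρ'] := by simpa using hsch
      have h2 : y1 = ρ' := by
        have := sch_head ((y1, y2) :: rest)
        rw [h1] at this
        simpa using this.symm
      subst h2
      exact ⟨(ρ, S), y2, Relation.ReflTransGen.refl, hBxy⟩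

/-- Glue a silent chain list (minus its last element) onto a trace starting at
that last element. -/
theorem glue {l τ' : List (Store × Stm)} {v w : Store × Stm}
    (hc : l.Chain' B) (hh : l.head? = some v) (hl : l.getLast? = some w)
    (hτ : τ'.Chain' B) (hτh : τ'.head? = some w) :
    (l.dropLast ++ τ').Chain' B ∧ (l.dropLast ++ τ').head? = some v ∧
      ∀ x ∈ l.dropLast, x ∈ l := by
  obtain ⟨l', rfl⟩ : ∃ l', l = l' ++ [w] := by
    rcases List.eq_nil_or_concat l with rfl | ⟨l', a, rfl⟩
    · simp at hh
    · have : a = w := by simpa using hl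
      exact ⟨l', by simp [this, List.concat_eq_append]⟩
  rw [List.dropLast_concat]
  have hc' := (List.isChain_append.mp hc)
  refine ⟨List.isChain_append.mpr ⟨hc'.1, hτ, fun x hx y hy => ?_⟩, ?_, fun x hx => by simp [hx]⟩
  · have hy' : w = y := by rw [Option.mem_def, hτh] at hy; simpa using hy
    subst hy'
    exact hc'.2.2 x hx w (by simp)
  · cases l' with
    | nil =>
      have : w = v := by simpa using hh
      subst this
      exact hτh
    | cons a l'' =>
      have : a = v := by simpa using hh
      simp [this]

/-- The forward simulation: a bisimilar partner produces a trace with the same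
store changes. -/
theorem forward {R : Store → Stm → Stm → Prop} (hbis : IsBisim B R) :
    ∀ (τ : List (Store × Stm)), τ.Chain' B → ∀ (ρ : Store) (S₁ S₂ : Stm),
      τ.head? = some (ρ, S₁) → R ρ S₁ S₂ →
      ∃ τ₂ : List (Store × Stm), τ₂.Chain' B ∧ τ₂.head? = some (ρ, S₂) ∧ sch τ₂ = sch τ
  | [], _, _, _, _, hh, _ => by simp at hh
  | [(x1, x2)], _, ρ, S₁, S₂, hh, _ => by
    refine ⟨[(ρ, S₂)], List.isChain_singleton _, rfl, ?_⟩
    have hpair : (ρ, S₁) = ((x1, x2) : Store × Stm) := by simpa using hh.symm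
    have : ρ = x1 := congrArg Prod.fst hpair
    simp [sch, this]
  | (x1, x2) :: (y1, y2) :: rest, hch, ρ, S₁, S₂, hh, hR => by
    have hpair : (ρ, S₁) = ((x1, x2) : Store × Stm) := by simpa using hh.symm
    obtain ⟨rfl, rfl⟩ : ρ = x1 ∧ S₁ = x2 :=
      ⟨congrArg Prod.fst hpair, congrArg Prod.snd hpair⟩
    have hBxy : B (ρ, S₁) (y1, y2) := (List.isChain_cons_cons.mp hch).1
    obtain ⟨S₂', hweak, hR'⟩ := (hbis ρ S₁ S₂ hR).1 y1 y2 hBxy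
    obtain ⟨τ₂', hch', hh', hsch'⟩ :=
      forward hbis ((y1, y2) :: rest) (List.isChain_cons_cons.mp hch).2 y1 y2 S₂' rfl hR'
    rcases hweak with ⟨hst, hrtg⟩ | ⟨hst, u, v, hrtg₁, hstep, hrtg₂⟩
    · -- silent weak move: ρ = y1
      have hρy : ρ = y1 := hst
      subst hρy
      obtain ⟨l, hlc, hlh, hll, hlst⟩ := silent_chain_list hrtg
      obtain ⟨hgc, hgh, hgm⟩ := glue hlc hlh hll hch' hh'
      refine ⟨l.dropLast ++ τ₂', hgc, hgh, ?_⟩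
      rw [sch_append_silent l.dropLast (fun x hx => hlst x (hgm x hx)) hh']
      rw [hsch', sch_cc_eq]
    · -- store-changing weak move: ρ ≠ y1
      have hρy : ρ ≠ y1 := hst
      obtain ⟨l₁, h1c, h1h, h1l, h1st⟩ := silent_chain_list hrtg₁
      obtain ⟨l₂, h2c, h2h, h2l, h2st⟩ := silent_chain_list hrtg₂
      have hv1 : v.1 = y1 := sil_store hrtg₂
      obtain ⟨hgc, hgh, hgm⟩ := glue h2c h2h h2l hch' hh'
      refine ⟨l₁ ++ (l₂.dropLast ++ τ₂'), ?_, ?_, ?_⟩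
      · refine List.isChain_append.mpr ⟨h1c, hgc, fun x hx y hy => ?_⟩
        have hx' : u = x := by rw [Option.mem_def, h1l] at hx; simpa using hx
        have hy' : v = y := by rw [Option.mem_def, hgh] at hy; simpa using hy
        subst hx'; subst hy'
        exact hstep
      · cases l₁ with
        | nil => simp at h1h
        | cons a l₁' =>
          have : a = (ρ, S₂) := by simpa using h1h
          simp [this]
      · have hmh : (l₂.dropLast ++ τ₂').head? = some (y1, v.2) := by
          rw [← hv1]; simpa using hgh
        rw [sch_append_change hρy l₁ (by rintro rfl; simp at h1h)
          (fun x hx => h1st x hx) hmh]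
        rw [sch_append_silent l₂.dropLast
          (fun x hx => (h2st x (hgm x hx)).trans hv1)
          (show τ₂'.head? = some (y1, S₂') from hh')]
        rw [hsch', sch_cc_ne hρy]

end Sem2
section Main

variable {Store Stm : Type*} [DecidableEq Store]
variable {B : Store × Stm → Store × Stm → Prop}

theorem step_match (hdet : ∀ s t t' : Store × Stm, B s t → B s t' → t = t')
    {ρ : Store} {X Y : Stm}
    (hXY : alphaSchAt ρ (Traces B X) = alphaSchAt ρ (Traces B Y))
    {ρ' : Store} {X' : Stm} (hB : B (ρ, X) (ρ', X')) :
    ∃ Y', Weak B (ρ, Y) (ρ', Y') ∧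
      alphaSchAt ρ' (Traces B X') = alphaSchAt ρ' (Traces B Y') := by
  by_cases hρ : ρ = ρ'
  · subst hρ
    exact ⟨Y, Or.inl ⟨rfl, Relation.ReflTransGen.refl⟩,
      (alpha_silent hdet hB).symm.trans hXY⟩
  · have hXa := alpha_change hdet hB hρ
    have hmem : [ρ, ρ'] ∈ alphaSchAt ρ (Traces B Y) := by
      rw [← hXY, hXa]
      right
      exact ⟨[ρ'], ⟨[(ρ', X')], mem_traces_single X' ρ', ⟨X', rfl⟩, by simp [sch]⟩, rfl⟩
    obtain ⟨τ, ⟨hn, ⟨ρ₀, hh₀⟩, hchτ⟩, ⟨T, hh⟩, hsτ⟩ := hmem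
    have hhh : τ.head? = some (ρ, Y) := by
      have h2 : ((ρ₀, Y) : Store × Stm) = (ρ, T) :=
        Option.some.inj (hh₀.symm.trans hh)
      have hρ₀ : ρ₀ = ρ := congrArg Prod.fst h2
      rw [hh₀, hρ₀]
    obtain ⟨u, Y'', hrtg, hstep⟩ := extract_change τ hchτ Y hhh hsτ
    have hu1 : u.1 = ρ := (sil_store hrtg).symm
    have hBu : B (u.1, u.2) (ρ', Y'') := by simpa using hstep
    have hrun : alphaSchAt ρ (Traces B Y) = alphaSchAt ρ (Traces B u.2) :=
      alpha_silent_run hdet hrtg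
    have hch2 := alpha_change hdet hBu (by rw [hu1]; exact hρ)
    rw [hu1] at hch2
    have key : insert [ρ] ((fun l => ρ :: l) '' alphaSchAt ρ' (Traces B X')) =
        insert [ρ] ((fun l => ρ :: l) '' alphaSchAt ρ' (Traces B Y'')) := by
      rw [← hXa, hXY, hrun, hch2]
    have hnotin : ∀ (Z : Stm) (z : List Store),
        z ∈ (fun l => ρ :: l) '' alphaSchAt ρ' (Traces B Z) → z ≠ [ρ] := by
      rintro Z z ⟨l, ⟨τ', ⟨hn', -, -⟩, -, rfl⟩, rfl⟩ hz
      exact sch_ne_nil hn' (by simpa using hz)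
    have himg : ((fun l => ρ :: l) '' alphaSchAt ρ' (Traces B X')) =
        ((fun l => ρ :: l) '' alphaSchAt ρ' (Traces B Y'')) := by
      ext z
      constructor <;> intro hz
      · have h1 : z ∈ insert [ρ] ((fun l => ρ :: l) '' alphaSchAt ρ' (Traces B Y'')) :=
          key ▸ Set.mem_insert_iff.mpr (Or.inr hz)
        rcases Set.mem_insert_iff.mp h1 with h | h
        · exact absurd h (hnotin X' z hz)
        · exact h
      · have h1 : z ∈ insert [ρ] ((fun l => ρ :: l) '' alphaSchAt ρ' (Traces B X')) :=
          key.symm ▸ Set.mem_insert_iff.mpr (Or.inr hz)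
        rcases Set.mem_insert_iff.mp h1 with h | h
        · exact absurd h (hnotin Y'' z hz)
        · exact h
    have hinj : Function.Injective (fun l : List Store => ρ :: l) :=
      fun a b h => by simpa using h
    exact ⟨Y'', Or.inr ⟨hρ, u, (ρ', Y''), hrtg, hstep, Relation.ReflTransGen.refl⟩,
      (Set.image_eq_image hinj).mp himg⟩

end Main
/-- For a deterministic small-step semantics →_B, two statements are bisimilar at
store ρ iff the store-changes abstractions (restricted to initial store ρ) of
their trace semantics coincide. -/
theorem bisimilarity_iff_store_changes {Store Stm : Type*} [DecidableEq Store]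
    (B : Store × Stm → Store × Stm → Prop)
    (hdet : ∀ s t t' : Store × Stm, B s t → B s t' → t = t')
    (ρ : Store) (S₁ S₂ : Stm) :
    (∃ R : Store → Stm → Stm → Prop, IsBisim B R ∧ R ρ S₁ S₂) ↔
      alphaSchAt ρ (Traces B S₁) = alphaSchAt ρ (Traces B S₂) := by
  constructor
  · rintro ⟨R, hbis, hR⟩
    have hbis' : IsBisim B (fun σ a b => R σ b a) := by
      intro σ a b h
      refine ⟨fun σ' a' hBa => ?_, fun σ' b' hBb => ?_⟩
      · obtain ⟨b', hw, hr⟩ := (hbis σ b a h).2 σ' a' hBa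
        exact ⟨b', hw, hr⟩
      · obtain ⟨a', hw, hr⟩ := (hbis σ b a h).1 σ' b' hBb
        exact ⟨a', hw, hr⟩
    ext L
    constructor
    · rintro ⟨τ, ⟨hne, ⟨ρ₀, hh₀⟩, hch⟩, ⟨T, hh⟩, rfl⟩
      have h2 : ((ρ₀, S₁) : Store × Stm) = (ρ, T) := Option.some.inj (hh₀.symm.trans hh)
      have hhh : τ.head? = some (ρ, S₁) := by
        have hρ₀ : ρ₀ = ρ := by simpa using congrArg Prod.fst h2
        rw [hh₀, hρ₀]
      obtain ⟨τ₂, hc₂, hh₂, hs₂⟩ := forward hbis τ hch ρ S₁ S₂ hhh hR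
      exact ⟨τ₂, ⟨by rintro rfl; simp at hh₂, ⟨ρ, hh₂⟩, hc₂⟩, ⟨S₂, hh₂⟩, hs₂⟩
    · rintro ⟨τ, ⟨hne, ⟨ρ₀, hh₀⟩, hch⟩, ⟨T, hh⟩, rfl⟩
      have h2 : ((ρ₀, S₂) : Store × Stm) = (ρ, T) := Option.some.inj (hh₀.symm.trans hh)
      have hhh : τ.head? = some (ρ, S₂) := by
        have hρ₀ : ρ₀ = ρ := by simpa using congrArg Prod.fst h2
        rw [hh₀, hρ₀]
      obtain ⟨τ₂, hc₂, hh₂, hs₂⟩ := forward hbis' τ hch ρ S₂ S₁ hhh hR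
      exact ⟨τ₂, ⟨by rintro rfl; simp at hh₂, ⟨ρ, hh₂⟩, hc₂⟩, ⟨S₁, hh₂⟩, hs₂⟩
  · intro heq
    refine ⟨fun σ a b => alphaSchAt σ (Traces B a) = alphaSchAt σ (Traces B b), ?_, heq⟩
    intro σ X Y hXY
    constructor
    · intro σ' X' hB
      exact step_match hdet hXY hB
    · intro σ' Y' hB
      obtain ⟨X'', hw, he⟩ := step_match hdet hXY.symm hB
      exact ⟨X'', hw, he.symm⟩
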